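/- Let L be a finite lattice, let (a,b) be a decoration site of L, and let t be a doubly irreducible element with a < t < b. Then t is neither the lower corner nor the upper corner of any decoration site of L, and if (a′,b′) is any decoration site of L with a′ < t < b′, then a′ = a and b′ = b. In particular, a doubly irreducible element lies strictly between the corners of at most one decoration site. -/
import Mathlib


/-- An element of a finite lattice is *doubly irreducible* if it has exactly one
upper cover and exactly one lower cover. -/
def DoublyIrreducible {α : Type*} [Lattice α] (x : α) : Prop :=
  (∃! u, x ⋖ u) ∧ (∃! l, l ⋖ x)

/-- A *decoration site* of a lattice is a pair `(a, b)` such that the set of upper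
covers of `a` equals the set of lower covers of `b`, and `a` has at least two
upper covers. -/
def DecorationSite {α : Type*} [Lattice α] (a b : α) : Prop :=
  {x | a ⋖ x} = {x | x ⋖ b} ∧ 2 ≤ {x | a ⋖ x}.ncard

/-- The doubly irreducible elements strictly between `a` and `b`. -/
def siteTrinkets {α : Type*} [Lattice α] (a b : α) : Set α :=
  {x | DoublyIrreducible x ∧ a < x ∧ x < b}

/-- A *trinket-removal set* of a lattice: for every decoration site `(a, b)` it
contains exactly `min d (k - 2)` doubly irreducible elements strictly between
`a` and `b` (where `d` is the number of doubly irreducible elements strictly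
between `a` and `b`, and `k` is the number of upper covers of `a`), and it
contains no other elements. -/
def TrinketRemovalSet {α : Type*} [Lattice α] (T : Set α) : Prop :=
  (∀ a b : α, DecorationSite a b →
      (T ∩ siteTrinkets a b).ncard =
        min (siteTrinkets a b).ncard ({x | a ⋖ x}.ncard - 2)) ∧
  ∀ t ∈ T, ∃ a b : α, DecorationSite a b ∧ t ∈ siteTrinkets a b

/-- A finite lattice is a *rack* if `min d (k - 2) = 0` for every decoration site. -/
def IsRack (α : Type*) [Lattice α] : Prop :=
  ∀ a b : α, DecorationSite a b →
    min (siteTrinkets a b).ncard ({x | a ⋖ x}.ncard - 2) = 0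

/-- A *knot* of a finite lattice is an element distinct from top and bottom that
is comparable with every element. -/
def IsKnot {α : Type*} [Lattice α] (x : α) : Prop :=
  (∃ y, x < y) ∧ (∃ y, y < x) ∧ ∀ y, x ≤ y ∨ y ≤ x

/-- Birkhoff's semimodularity condition: whenever distinct `x` and `y` both
cover a common element `a`, the join `x ⊔ y` covers both `x` and `y`. -/
def Semimodular (α : Type*) [Lattice α] : Prop :=
  ∀ a x y : α, x ≠ y → a ⋖ x → a ⋖ y → x ⋖ x ⊔ y ∧ y ⋖ x ⊔ y

/-- The modular law: for all `x ≤ z`, `x ⊔ (y ⊓ z) = (x ⊔ y) ⊓ z`. -/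
def ModularLaw (α : Type*) [Lattice α] : Prop :=
  ∀ x y z : α, x ≤ z → x ⊔ (y ⊓ z) = (x ⊔ y) ⊓ z

/-- A doubly irreducible element strictly between the corners of a decoration
site is neither the lower nor the upper corner of any decoration site, and it
lies strictly between the corners of at most one decoration site. -/
private lemma covBy_of_site {α : Type*} [Lattice α] [Finite α] {a b t : α}
    (hab : DecorationSite a b) (h1 : a < t) (h2 : t < b) : a ⋖ t ∧ t ⋖ b := by
  obtain ⟨hset, -⟩ := hab
  obtain ⟨x, hax, hxt⟩ := exists_covBy_le_of_lt h1
  have hxb : x ⋖ b := by rw [Set.ext_iff] at hset; exact (hset x).1 hax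
  have hxt' : x = t := by
    rcases lt_or_eq_of_le hxt with h | h
    · exact absurd h2 (hxb.2 h)
    · exact h
  obtain ⟨y, hty, hyb⟩ := exists_le_covBy_of_lt h2
  have hay : a ⋖ y := by rw [Set.ext_iff] at hset; exact (hset y).2 hyb
  have hyt' : t = y := by
    rcases lt_or_eq_of_le hty with h | h
    · exact absurd h (hay.2 h1)
    · exact h
  exact ⟨hxt' ▸ hax, hyt' ▸ hyb⟩

theorem stmt_4 {α : Type*} [Lattice α] [Finite α] [Nonempty α] {a b t : α}
    (hab : DecorationSite a b) (ht : DoublyIrreducible t) (h1 : a < t) (h2 : t < b) :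
    (∀ c : α, ¬ DecorationSite t c) ∧
    (∀ c : α, ¬ DecorationSite c t) ∧
    (∀ a' b' : α, DecorationSite a' b' → a' < t → t < b' → a' = a ∧ b' = b) := by
  obtain ⟨⟨u, hu, huu⟩, ⟨l, hl, hll⟩⟩ := ht
  have hup : {x | t ⋖ x} = {u} := Set.eq_singleton_iff_unique_mem.2 ⟨hu, huu⟩
  have hlo : {x | x ⋖ t} = {l} := Set.eq_singleton_iff_unique_mem.2 ⟨hl, hll⟩
  refine ⟨fun c hc => ?_, fun c hc => ?_, fun a' b' h' h1' h2' => ?_⟩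
  · have := hc.2
    rw [hup, Set.ncard_singleton] at this
    omega
  · have := hc.2
    rw [hc.1, hlo, Set.ncard_singleton] at this
    omega
  · obtain ⟨hat, htb⟩ := covBy_of_site hab h1 h2
    obtain ⟨hat', htb'⟩ := covBy_of_site h' h1' h2'
    exact ⟨(hll _ hat').trans (hll _ hat).symm, (huu _ htb').trans (huu _ htb).symm⟩
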